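/- Let f : R → S be a surjective homomorphism of unital rings such that: (i) R is finitely generated as an abelian group; (ii) the kernel I = ker(f) is finite; (iii) f is a split surjection in the category of abelian groups, i.e., there is an additive group homomorphism s : S → R with f ∘ s = id_S. Then the induced group homomorphism on units f× : R× → S× is surjective. -/

import Mathlib

open Polynomial

private lemma stmt_9_aux {A : Type*} [Ring A] (x : A) (k : ℕ) :
    x + (1 - x) * (1 - x ^ (k + 1)) = x ^ (k + 2) + 1 - x ^ (k + 1) := by
  have h : x * x ^ (k + 1) = x ^ (k + 2) := (pow_succ' x (k + 1)).symm
  rw [sub_mul, one_mul, mul_sub, mul_one, h]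
  abel

/-- Let `f : R → S` be a surjective unital ring homomorphism such that `R` is a
finitely generated abelian group, the kernel of `f` is finite, and `f` splits as
a homomorphism of abelian groups. Then `f` is surjective on units. -/
theorem stmt_9 {R S : Type*} [Ring R] [Ring S] (f : R →+* S)
    (hsurj : Function.Surjective f)
    (hfg : AddGroup.FG R)
    (hfin : (RingHom.ker f : Set R).Finite)
    (hsplit : ∃ s : S →+ R, ∀ x : S, f (s x) = x) :
    Function.Surjective (Units.map (f : R →* S)) := by
  intro ξ
  obtain ⟨a, ha⟩ := hsurj (ξ : S)
  obtain ⟨b, hb⟩ := hsurj ((ξ⁻¹ : Sˣ) : S)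
  haveI : Finite (RingHom.ker f) := hfin.to_subtype
  haveI : Nonempty (RingHom.ker f) := ⟨⟨0, zero_mem _⟩⟩
  set n : ℕ := Nat.card (RingHom.ker f) with hn
  have hn0 : 0 < n := Nat.card_pos
  -- n kills the kernel
  have hkill : ∀ r : R, f r = 0 → n • r = 0 := by
    intro r hr
    have h := card_nsmul_eq_zero' (x := (⟨r, RingHom.mem_ker.mpr hr⟩ : RingHom.ker f))
    have h2 := congrArg (Subtype.val) h
    rw [← hn] at h2
    simpa using h2
  -- the "J = nR" predicate
  set Jp : R → Prop := fun r => ∃ s : R, r = n • s with hJp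
  have hJp0 : Jp 0 := ⟨0, by simp⟩
  -- the ring congruence mod nR
  let c : RingCon R :=
    { r := fun x y => Jp (x - y)
      iseqv := ⟨fun x => ⟨0, by simp⟩,
        fun {x y} h => by
          obtain ⟨s, hs⟩ := h
          exact ⟨-s, by rw [smul_neg, ← hs, neg_sub]⟩,
        fun {x y z} h h' => by
          obtain ⟨s, hs⟩ := h; obtain ⟨t, ht⟩ := h'
          exact ⟨s + t, by rw [smul_add, ← hs, ← ht, sub_add_sub_cancel]⟩⟩
      add' := fun {w x y z} h h' => by
        obtain ⟨s, hs⟩ := h; obtain ⟨t, ht⟩ := h'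
        exact ⟨s + t, by rw [smul_add, ← hs, ← ht]; abel⟩
      mul' := fun {w x y z} h h' => by
        obtain ⟨s, hs⟩ := h; obtain ⟨t, ht⟩ := h'
        refine ⟨w * t + s * z, ?_⟩
        rw [smul_add, ← mul_smul_comm, ← smul_mul_assoc, ← hs, ← ht, mul_sub, sub_mul]
        abel }
  have hcoe_surj : Function.Surjective (fun r : R => (r : c.Quotient)) := by
    intro x
    exact Quotient.inductionOn' x fun r => ⟨r, rfl⟩
  -- the quotient is finite
  haveI : Finite c.Quotient := by
    haveI hfg2 : AddGroup.FG c.Quotient := by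
      refine AddGroup.fg_of_surjective (G := R) (f := (c.mk' : R →+* c.Quotient).toAddMonoidHom) ?_
      intro x
      exact Quotient.inductionOn' x fun r => ⟨r, rfl⟩
    refine AddCommGroup.finite_of_fg_torsion _ ?_
    intro x
    obtain ⟨r, rfl⟩ := hcoe_surj x
    rw [isOfFinAddOrder_iff_nsmul_eq_zero]
    refine ⟨n, hn0, ?_⟩
    have hrel : c (n • r) 0 := ⟨r, by rw [sub_zero]⟩
    calc n • ((r : R) : c.Quotient) = ((n • r : R) : c.Quotient) := (RingCon.coe_nsmul c n r).symm
      _ = ((0 : R) : c.Quotient) := (RingCon.eq c).mpr hrel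
      _ = 0 := RingCon.coe_zero c
  set β : c.Quotient := ((a : R) : c.Quotient) with hβ
  -- pigeonhole: some power repeats
  obtain ⟨i, j, hlt, heq⟩ : ∃ i j : ℕ, i < j ∧ β ^ i = β ^ j := by
    obtain ⟨i, j, hne, he⟩ := Finite.exists_ne_map_eq_of_infinite (fun t : ℕ => β ^ t)
    rcases lt_or_gt_of_ne hne with h | h
    exacts [⟨i, j, h, he⟩, ⟨j, i, h, he.symm⟩]
  set p : ℕ := j - i with hp'
  have hp : 0 < p := by omega
  have hstep : ∀ t, i ≤ t → β ^ (t + p) = β ^ t := by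
    intro t ht
    have h1 : t + p = (t - i) + j := by omega
    have h2 : t = (t - i) + i := by omega
    rw [h1, pow_add, ← heq, ← pow_add, ← h2]
  have hiter : ∀ l t, i ≤ t → β ^ (t + l * p) = β ^ t := by
    intro l
    induction l with
    | zero => intro t _; simp
    | succ l ih =>
      intro t ht
      have h1 : t + (l + 1) * p = (t + l * p) + p := by ring
      rw [h1, hstep (t + l * p) (by omega), ih t ht]
  set q : ℕ := (i + 1) * p with hq
  have hqpos : 0 < q := Nat.mul_pos (Nat.succ_pos i) hp
  have hqge : i + 1 ≤ q := by
    calc i + 1 = (i + 1) * 1 := (Nat.mul_one _).symm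
      _ ≤ (i + 1) * p := Nat.mul_le_mul_left _ hp
  set k : ℕ := q - 1 with hk'
  have hk : q = k + 1 := by omega
  -- the key relation : β ^ (2k+2) = β ^ (k+1)
  have h1 : β ^ (2 * k + 2) = β ^ (k + 1) := by
    have h := hiter (i + 1) (k + 1) (by omega)
    rw [← hq, hk] at h
    rw [show 2 * k + 2 = (k + 1) + (k + 1) from by omega]
    exact h
  -- the elements
  set i₀ : R := (1 - a ^ (k + 1)) - (a ^ (k + 1) - a ^ (2 * k + 2)) * b ^ (k + 1) with hi₀def
  set A : R := a + (1 - a) * i₀ with hAdef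
  set B' : R := a ^ (2 * k + 1) + 1 - a ^ (k + 1) with hB'def
  have hvw : (↑ξ : S) ^ (k + 1) * (↑(ξ⁻¹) : S) ^ (k + 1) = 1 := by
    rw [← Units.val_pow_eq_pow_val, ← Units.val_pow_eq_pow_val, ← Units.val_mul, inv_pow,
      mul_inv_cancel, Units.val_one]
  have hfi₀ : f i₀ = 0 := by
    rw [hi₀def, map_sub, map_sub, map_one, map_mul, map_sub, map_pow, map_pow, map_pow, ha, hb]
    rw [show 2 * k + 2 = (k + 1) + (k + 1) from by omega,
      pow_add ((ξ : S)) (k + 1) (k + 1), sub_mul, hvw, mul_assoc, hvw, mul_one]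
    abel
  have hfA : f A = (↑ξ : S) := by
    rw [hAdef, map_add, map_mul, hfi₀, mul_zero, add_zero, ha]
  -- images in the quotient
  have hπi₀ : ((i₀ : R) : c.Quotient) = 1 - β ^ (k + 1) := by
    rw [hi₀def, RingCon.coe_sub, RingCon.coe_sub, RingCon.coe_one, RingCon.coe_mul,
      RingCon.coe_sub, RingCon.coe_pow, RingCon.coe_pow, RingCon.coe_pow, ← hβ, h1, sub_self,
      zero_mul, sub_zero]
  have hπA : ((A : R) : c.Quotient) = β ^ (k + 2) + 1 - β ^ (k + 1) := by
    rw [hAdef, RingCon.coe_add, RingCon.coe_mul, RingCon.coe_sub, RingCon.coe_one, hπi₀, ← hβ]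
    exact stmt_9_aux β k
  have hπB' : ((B' : R) : c.Quotient) = β ^ (2 * k + 1) + 1 - β ^ (k + 1) := by
    rw [hB'def, RingCon.coe_sub, RingCon.coe_add, RingCon.coe_pow, RingCon.coe_one,
      RingCon.coe_pow, ← hβ]
  -- polynomial computation
  have happ : ∀ F G : Polynomial ℤ,
      F * G = 1 + (X ^ (k + 1) - X - X ^ k + 2) * (X ^ (2 * k + 2) - X ^ (k + 1)) →
      (Polynomial.aeval β F) * (Polynomial.aeval β G) = 1 := by
    intro F G h
    have h2 := congrArg (Polynomial.aeval β) h
    rw [map_mul, map_add, map_one, map_mul, map_sub, map_pow, map_pow, Polynomial.aeval_X] at h2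
    rw [h2, h1, sub_self, mul_zero, add_zero]
  have hP : (Polynomial.aeval β) (X ^ (k + 2) + 1 - X ^ (k + 1) : Polynomial ℤ)
      = β ^ (k + 2) + 1 - β ^ (k + 1) := by
    simp
  have hQ : (Polynomial.aeval β) (X ^ (2 * k + 1) + 1 - X ^ (k + 1) : Polynomial ℤ)
      = β ^ (2 * k + 1) + 1 - β ^ (k + 1) := by
    simp
  have hAB : ((A * B' : R) : c.Quotient) = 1 := by
    rw [RingCon.coe_mul, hπA, hπB', ← hP, ← hQ]
    exact happ _ _ (by ring)
  have hBA : ((B' * A : R) : c.Quotient) = 1 := by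
    rw [RingCon.coe_mul, hπA, hπB', ← hP, ← hQ]
    exact happ _ _ (by ring)
  -- extract J-membership
  have hx'J : Jp (A * B' - 1) := by
    have h : ((A * B' - 1 : R) : c.Quotient) = ((0 : R) : c.Quotient) := by
      rw [RingCon.coe_sub, RingCon.coe_one, hAB, RingCon.coe_zero, sub_self]
    have h2 : c (A * B' - 1) 0 := (RingCon.eq c).mp h
    have h3 : Jp (A * B' - 1 - 0) := h2
    rwa [sub_zero] at h3
  have hy'J : Jp (B' * A - 1) := by
    have h : ((B' * A - 1 : R) : c.Quotient) = ((0 : R) : c.Quotient) := by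
      rw [RingCon.coe_sub, RingCon.coe_one, hBA, RingCon.coe_zero, sub_self]
    have h2 : c (B' * A - 1) 0 := (RingCon.eq c).mp h
    have h3 : Jp (B' * A - 1 - 0) := h2
    rwa [sub_zero] at h3
  -- I * J = J * I = 0
  have hIJ : ∀ x y : R, f x = 0 → Jp y → x * y = 0 := by
    rintro x y hx ⟨s, rfl⟩
    rw [mul_smul_comm]
    exact hkill _ (by rw [map_mul, hx, zero_mul])
  have hJI : ∀ x y : R, Jp x → f y = 0 → x * y = 0 := by
    rintro x y ⟨s, rfl⟩ hy
    rw [smul_mul_assoc]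
    exact hkill _ (by rw [map_mul, hy, mul_zero])
  -- I-membership of the defects of b
  have hx₂ : f (A * b - 1) = 0 := by
    rw [map_sub, map_mul, hfA, hb, map_one]
    simp
  have hy₂ : f (b * A - 1) = 0 := by
    rw [map_sub, map_mul, hfA, hb, map_one]
    simp
  -- assemble the unit
  set x' : R := A * B' - 1 with hx'def
  set y' : R := B' * A - 1 with hy'def
  set V : R := B' - b * x' with hVdef
  set W : R := B' - y' * b with hWdef
  have hABeq : A * B' = x' + 1 := by rw [hx'def]; abel
  have hBAeq : B' * A = y' + 1 := by rw [hy'def]; abel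
  have hAbeq : A * b = (A * b - 1) + 1 := by abel
  have hbAeq : b * A = (b * A - 1) + 1 := by abel
  have hAV : A * V = 1 := by
    have h0 : (A * b - 1) * x' = 0 := hIJ _ _ hx₂ hx'J
    calc A * V = A * B' - A * b * x' := by rw [hVdef, mul_sub, mul_assoc]
      _ = (x' + 1) - (((A * b - 1) + 1) * x') := by rw [hABeq, ← hAbeq]
      _ = (x' + 1) - ((A * b - 1) * x' + 1 * x') := by rw [add_mul]
      _ = 1 := by rw [h0, one_mul, zero_add]; abel
  have hWA : W * A = 1 := by
    have h0 : y' * (b * A - 1) = 0 := hJI _ _ hy'J hy₂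
    calc W * A = B' * A - y' * (b * A) := by rw [hWdef, sub_mul, mul_assoc]
      _ = (y' + 1) - (y' * ((b * A - 1) + 1)) := by rw [hBAeq, ← hbAeq]
      _ = (y' + 1) - (y' * (b * A - 1) + y' * 1) := by rw [mul_add]
      _ = 1 := by rw [h0, mul_one, zero_add]; abel
  have hVA : V * A = 1 := by
    have hWV : W = V := by
      calc W = W * (A * V) := by rw [hAV, mul_one]
        _ = (W * A) * V := (mul_assoc W A V).symm
        _ = V := by rw [hWA, one_mul]
    rw [← hWV]
    exact hWA
  refine ⟨⟨A, V, hAV, hVA⟩, ?_⟩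
  apply Units.ext
  simpa using hfA
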